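/- Let C₀(Q) ⊆ D ⊆ A be non-degenerate C*-inclusions with C₀(Q) contained in the center of D, let q₁, q₂ ∈ Q, and let n ∈ N_A(C₀(Q)) ∩ N_A(D). Then n C_{0,q₁}(Q) n* ⊆ C_{0,q₂}(Q) if and only if n J^unif_{q₁} n* ⊆ J^unif_{q₂}, where for j = 1, 2, J^unif_{q_j} denotes the closed two-sided ideal of D generated by C_{0,q_j}(Q). -/

import Mathlib

open ZeroAtInfty

/-- The set of normalizers of `S`: `{n | n S n* ⊆ S and n* S n ⊆ S}`. -/
def normalizerIn {R : Type*} [Mul R] [Star R] (S : Set R) : Set R :=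
  {n | ∀ s ∈ S, n * s * star n ∈ S ∧ star n * s * n ∈ S}

/-- `J` is a closed two-sided ideal of (the C*-subalgebra with underlying set) `Bs`. -/
def IsClosedIdealOf {A : Type*} [NonUnitalCStarAlgebra A] (J Bs : Set A) : Prop :=
  J ⊆ Bs ∧ IsClosed J ∧ (0 : A) ∈ J ∧
  (∀ x ∈ J, ∀ y ∈ J, x + y ∈ J) ∧ (∀ c : ℂ, ∀ x ∈ J, c • x ∈ J) ∧
  (∀ x ∈ J, ∀ b ∈ Bs, b * x ∈ J ∧ x * b ∈ J)

/-- `J^unif_q`: the closed two-sided ideal of `D` generated by `C_{0,q}(Q)`, realized as the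
intersection of all closed two-sided ideals of `D` containing `{ι f : f q = 0}`. -/
def JunifD {Q : Type*} [TopologicalSpace Q] [LocallyCompactSpace Q] [T2Space Q]
    {A : Type*} [NonUnitalCStarAlgebra A] (D : NonUnitalStarSubalgebra ℂ A)
    (ι : C₀(Q, ℂ) →⋆ₙₐ[ℂ] A) (q : Q) : Set A :=
  ⋂₀ {L : Set A | IsClosedIdealOf L (D : Set A) ∧ ∀ f : C₀(Q, ℂ), f q = 0 → ι f ∈ L}

section Helpers
variable {Q : Type*} [TopologicalSpace Q] [LocallyCompactSpace Q] [T2Space Q]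

set_option linter.unusedSectionVars false

lemma zai_apply_le (f : C₀(Q, ℂ)) (x : Q) : ‖f x‖ ≤ ‖f‖ :=
  f.toBCF.norm_coe_le_norm x

lemma zai_norm_le (f : C₀(Q, ℂ)) {C : ℝ} (h0 : 0 ≤ C) (h : ∀ x, ‖f x‖ ≤ C) : ‖f‖ ≤ C := by
  rw [← ZeroAtInftyContinuousMap.norm_toBCF_eq_norm]
  exact (BoundedContinuousFunction.norm_le h0).mpr h

/-- `e` takes real values in `[0,1]`. -/
def Good01 {Q : Type*} [TopologicalSpace Q] (e : C₀(Q, ℂ)) : Prop :=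
  ∀ x, ∃ t : ℝ, 0 ≤ t ∧ t ≤ 1 ∧ e x = t

/-- Urysohn in `C₀`: `e = 1` on compact `K`, `e = 0` off open `V ⊇ K`, `0 ≤ e ≤ 1`. -/
lemma zai_urysohn {K V : Set Q} (hK : IsCompact K) (hV : IsOpen V) (hKV : K ⊆ V) :
    ∃ e : C₀(Q, ℂ), Good01 e ∧ (∀ x ∈ K, e x = 1) ∧ (∀ x ∉ V, e x = 0) := by
  obtain ⟨e', h1, h0, hcs, h01⟩ := exists_continuous_one_zero_of_isCompact hK
    hV.isClosed_compl (Set.disjoint_left.mpr fun x hx hxc => hxc (hKV hx))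
  have hz : Filter.Tendsto (fun x : Q => ((e' x : ℝ) : ℂ)) (Filter.cocompact Q) (nhds 0) := by
    have hev : ∀ᶠ x in Filter.cocompact Q, ((e' x : ℝ) : ℂ) = 0 := by
      refine Filter.mem_of_superset
        (Filter.mem_cocompact.mpr ⟨tsupport e', hcs, subset_rfl⟩) ?_
      intro x hx
      simp only [Set.mem_compl_iff] at hx
      simp [image_eq_zero_of_notMem_tsupport hx]
    exact Filter.Tendsto.congr' (hev.mono fun x hx => hx.symm) tendsto_const_nhds
  refine ⟨⟨⟨fun x => ((e' x : ℝ) : ℂ), Complex.continuous_ofReal.comp e'.continuous⟩, hz⟩,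
    ?_, ?_, ?_⟩
  · intro x; exact ⟨e' x, (h01 x).1, (h01 x).2, rfl⟩
  · intro x hx; simp [h1 hx]
  · intro x hx; simp [h0 hx]

lemma zai_small_off_compact (f : C₀(Q, ℂ)) {δ : ℝ} (hδ : 0 < δ) :
    ∃ K : Set Q, IsCompact K ∧ ∀ x ∉ K, ‖f x‖ < δ := by
  have h := Metric.tendsto_nhds.mp (zero_at_infty f) δ hδ
  obtain ⟨K, hK, hsub⟩ := Filter.mem_cocompact.mp h
  exact ⟨K, hK, fun x hx => by simpa [dist_zero_right] using hsub hx⟩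

lemma good_norm_le {e : C₀(Q, ℂ)} (he : Good01 e) : ‖e‖ ≤ 1 := by
  refine zai_norm_le e zero_le_one fun x => ?_
  obtain ⟨t, ht0, ht1, hte⟩ := he x
  rw [hte]
  simpa [Complex.norm_real, Real.norm_eq_abs, abs_of_nonneg ht0] using ht1

lemma good_sub_one_le {e : C₀(Q, ℂ)} (he : Good01 e) (x : Q) : ‖e x - 1‖ ≤ 1 := by
  obtain ⟨t, ht0, ht1, hte⟩ := he x
  rw [hte]
  rw [show ((t : ℝ) : ℂ) - 1 = ((t - 1 : ℝ) : ℂ) by push_cast; ring]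
  rw [Complex.norm_real, Real.norm_eq_abs]
  rw [abs_of_nonpos (by linarith)]
  linarith

lemma div_succ_mul_lt {ε c : ℝ} (hε : 0 < ε) (hc : 0 ≤ c) : ε / (c + 1) * c < ε := by
  rw [div_mul_eq_mul_div, div_lt_iff₀ (by linarith)]
  nlinarith

end Helpers

section AU
variable {Q : Type*} [TopologicalSpace Q] [LocallyCompactSpace Q] [T2Space Q]
variable {A : Type*} [NonUnitalCStarAlgebra A]

/-- Approximate unit of `C₀(Q)` acting on all of `A`, from the two non-degeneracy hypotheses. -/
lemma approx_unit (D : NonUnitalStarSubalgebra ℂ A) (ι : C₀(Q, ℂ) →⋆ₙₐ[ℂ] A)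
    (hisom : Isometry ι)
    (hnd₁ : closure (Submodule.span ℂ
        {x : A | ∃ f : C₀(Q, ℂ), ∃ d ∈ D, x = ι f * d} : Set A) = (D : Set A))
    (hnd₂ : closure (Submodule.span ℂ
        {x : A | ∃ d ∈ D, ∃ a : A, x = d * a} : Set A) = Set.univ) :
    ∀ a : A, ∀ ε : ℝ, 0 < ε → ∃ e : C₀(Q, ℂ), Good01 e ∧ ‖ι e * a - a‖ < ε := by
  have hιnorm : ∀ g : C₀(Q, ℂ), ‖ι g‖ = ‖g‖ := fun g =>
    hisom.norm_map_of_map_zero (map_zero ι) g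
  set W : Set A := {a | ∀ ε : ℝ, 0 < ε → ∃ e : C₀(Q, ℂ), Good01 e ∧ ‖ι e * a - a‖ < ε} with hW
  have hW0 : (0 : A) ∈ W := by
    intro ε hε
    exact ⟨0, fun x => ⟨0, le_rfl, zero_le_one, by simp⟩, by simpa using hε⟩
  have hWsmul : ∀ (c : ℂ) (a : A), a ∈ W → c • a ∈ W := by
    intro c a ha ε hε
    obtain ⟨e, hg, hb⟩ := ha (ε / (‖c‖ + 1)) (by positivity)
    refine ⟨e, hg, ?_⟩
    have heq : ι e * (c • a) - c • a = c • (ι e * a - a) := by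
      rw [mul_smul_comm, smul_sub]
    rw [heq, norm_smul]
    calc ‖c‖ * ‖ι e * a - a‖ ≤ ε / (‖c‖ + 1) * ‖c‖ := by
          rw [mul_comm]; exact mul_le_mul_of_nonneg_right hb.le (norm_nonneg c)
      _ < ε := div_succ_mul_lt hε (norm_nonneg c)
  have hWadd : ∀ a b : A, a ∈ W → b ∈ W → a + b ∈ W := by
    intro a b ha hb ε hε
    obtain ⟨e₁, hg₁, h1⟩ := ha (ε / 4) (by positivity)
    obtain ⟨e₂, hg₂, h2⟩ := hb (ε / 4) (by positivity)
    have key : ∀ (u v : C₀(Q, ℂ)) (x : A),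
        ι (u + v - u * v) * x - x = (ι u * x - x) - ι v * (ι u * x - x) := by
      intro u v x
      rw [show u * v = v * u from mul_comm u v]
      simp only [map_sub, map_add, map_mul]
      noncomm_ring
    have hbound : ∀ (u v : C₀(Q, ℂ)) (x : A), Good01 v →
        ‖ι (u + v - u * v) * x - x‖ ≤ 2 * ‖ι u * x - x‖ := by
      intro u v x hv
      rw [key u v x]
      have hv1 : ‖ι v‖ ≤ 1 := by rw [hιnorm]; exact good_norm_le hv
      have h1' : ‖ι v * (ι u * x - x)‖ ≤ ‖ι u * x - x‖ := by
        calc ‖ι v * (ι u * x - x)‖ ≤ ‖ι v‖ * ‖ι u * x - x‖ := norm_mul_le _ _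
          _ ≤ 1 * ‖ι u * x - x‖ := mul_le_mul_of_nonneg_right hv1 (norm_nonneg _)
          _ = ‖ι u * x - x‖ := one_mul _
      calc ‖(ι u * x - x) - ι v * (ι u * x - x)‖
          ≤ ‖ι u * x - x‖ + ‖ι v * (ι u * x - x)‖ := norm_sub_le _ _
        _ ≤ ‖ι u * x - x‖ + ‖ι u * x - x‖ := add_le_add_right h1' _
        _ = 2 * ‖ι u * x - x‖ := by ring
    refine ⟨e₁ + e₂ - e₁ * e₂, ?_, ?_⟩
    · intro x
      obtain ⟨t₁, ht₁0, ht₁1, he₁⟩ := hg₁ x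
      obtain ⟨t₂, ht₂0, ht₂1, he₂⟩ := hg₂ x
      refine ⟨t₁ + t₂ - t₁ * t₂, by nlinarith, by nlinarith, ?_⟩
      simp only [ZeroAtInftyContinuousMap.sub_apply, ZeroAtInftyContinuousMap.add_apply,
        ZeroAtInftyContinuousMap.mul_apply, he₁, he₂]
      push_cast; ring
    · have hsym : e₁ + e₂ - e₁ * e₂ = e₂ + e₁ - e₂ * e₁ := by rw [mul_comm e₁ e₂, add_comm e₁ e₂]
      have da : ‖ι (e₁ + e₂ - e₁ * e₂) * a - a‖ ≤ 2 * ‖ι e₁ * a - a‖ := hbound e₁ e₂ a hg₂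
      have db : ‖ι (e₁ + e₂ - e₁ * e₂) * b - b‖ ≤ 2 * ‖ι e₂ * b - b‖ := by
        rw [hsym]; exact hbound e₂ e₁ b hg₁
      have hsplit : ι (e₁ + e₂ - e₁ * e₂) * (a + b) - (a + b) =
          (ι (e₁ + e₂ - e₁ * e₂) * a - a) + (ι (e₁ + e₂ - e₁ * e₂) * b - b) := by
        noncomm_ring
      calc ‖ι (e₁ + e₂ - e₁ * e₂) * (a + b) - (a + b)‖
          ≤ ‖ι (e₁ + e₂ - e₁ * e₂) * a - a‖ + ‖ι (e₁ + e₂ - e₁ * e₂) * b - b‖ := by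
            rw [hsplit]; exact norm_add_le _ _
        _ ≤ 2 * ‖ι e₁ * a - a‖ + 2 * ‖ι e₂ * b - b‖ := add_le_add da db
        _ < 2 * (ε / 4) + 2 * (ε / 4) := by
            have h2' := h2
            gcongr 2 * ?_ + 2 * ?_
        _ = ε := by ring
  have hWclosed : IsClosed W := by
    refine isClosed_of_closure_subset fun a ha => ?_
    intro ε hε
    obtain ⟨b, hbW, hab⟩ := Metric.mem_closure_iff.mp ha (ε / 3) (by positivity)
    obtain ⟨e, hg, hb⟩ := hbW (ε / 3) (by positivity)
    refine ⟨e, hg, ?_⟩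
    have hsplit : ι e * a - a = ι e * (a - b) + (ι e * b - b) + (b - a) := by noncomm_ring
    have h3 : ‖a - b‖ < ε / 3 := by rwa [← dist_eq_norm]
    have he1 : ‖ι e‖ ≤ 1 := by rw [hιnorm]; exact good_norm_le hg
    have t1 : ‖ι e * (a - b)‖ ≤ ‖a - b‖ := by
      calc ‖ι e * (a - b)‖ ≤ ‖ι e‖ * ‖a - b‖ := norm_mul_le _ _
        _ ≤ 1 * ‖a - b‖ := mul_le_mul_of_nonneg_right he1 (norm_nonneg _)
        _ = ‖a - b‖ := one_mul _
    have t2 : ‖ι e * a - a‖ ≤ ‖ι e * (a - b)‖ + ‖ι e * b - b‖ + ‖b - a‖ := by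
      rw [hsplit]
      exact (norm_add_le _ _).trans (add_le_add_left (norm_add_le _ _) _)
    rw [norm_sub_rev b a] at t2
    linarith
  have hDW : (D : Set A) ⊆ W := by
    rw [← hnd₁]
    refine closure_minimal ?_ hWclosed
    intro x hx
    refine Submodule.span_induction (fun y hy => ?_) hW0
      (fun y z _ _ hy hz => hWadd y z hy hz) (fun c y _ hy => hWsmul c y hy) hx
    obtain ⟨f, d, hd, rfl⟩ := hy
    intro ε hε
    have hδ : (0 : ℝ) < ε / (2 * (‖d‖ + 1)) := by positivity
    obtain ⟨K, hK, hKs⟩ := zai_small_off_compact f hδ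
    obtain ⟨e, hge, h1K, _⟩ := zai_urysohn hK isOpen_univ (Set.subset_univ K)
    refine ⟨e, hge, ?_⟩
    have heq : ι e * (ι f * d) - ι f * d = ι (e * f - f) * d := by
      rw [map_sub, map_mul]; noncomm_ring
    have hef : ‖e * f - f‖ ≤ ε / (2 * (‖d‖ + 1)) := by
      refine zai_norm_le _ hδ.le fun x => ?_
      have hx : (e * f - f) x = (e x - 1) * f x := by
        simp only [ZeroAtInftyContinuousMap.sub_apply, ZeroAtInftyContinuousMap.mul_apply]
        ring
      rw [hx]
      by_cases hxK : x ∈ K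
      · rw [h1K x hxK]
        simpa using hδ.le
      · calc ‖(e x - 1) * f x‖ = ‖e x - 1‖ * ‖f x‖ := norm_mul _ _
          _ ≤ 1 * (ε / (2 * (‖d‖ + 1))) :=
              mul_le_mul (good_sub_one_le hge x) (hKs x hxK).le (norm_nonneg _) zero_le_one
          _ = ε / (2 * (‖d‖ + 1)) := one_mul _
    calc ‖ι e * (ι f * d) - ι f * d‖ = ‖ι (e * f - f) * d‖ := by rw [heq]
      _ ≤ ‖e * f - f‖ * ‖d‖ := by rw [← hιnorm (e * f - f)]; exact norm_mul_le _ _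
      _ ≤ (ε / (2 * (‖d‖ + 1))) * ‖d‖ := by gcongr
      _ < ε := by
          rw [div_mul_eq_mul_div, div_lt_iff₀ (by positivity)]
          nlinarith [norm_nonneg d]
  intro a
  suffices h : a ∈ W by exact h
  have huniv : (Set.univ : Set A) ⊆ W := by
    rw [← hnd₂]
    refine closure_minimal ?_ hWclosed
    intro x hx
    refine Submodule.span_induction (fun y hy => ?_) hW0
      (fun y z _ _ hy hz => hWadd y z hy hz) (fun c y _ hy => hWsmul c y hy) hx
    obtain ⟨d, hd, b, rfl⟩ := hy
    intro ε hε
    obtain ⟨e, hg, hsmall⟩ := hDW hd (ε / (‖b‖ + 1)) (by positivity)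
    refine ⟨e, hg, ?_⟩
    have heq : ι e * (d * b) - d * b = (ι e * d - d) * b := by noncomm_ring
    calc ‖ι e * (d * b) - d * b‖ = ‖(ι e * d - d) * b‖ := by rw [heq]
      _ ≤ ‖ι e * d - d‖ * ‖b‖ := norm_mul_le _ _
      _ ≤ (ε / (‖b‖ + 1)) * ‖b‖ := by gcongr
      _ < ε := div_succ_mul_lt hε (norm_nonneg b)
  exact huniv (Set.mem_univ a)

end AU

section NS
set_option maxHeartbeats 1000000
variable {Q : Type*} [TopologicalSpace Q] [LocallyCompactSpace Q] [T2Space Q]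
variable {A : Type*} [NonUnitalCStarAlgebra A]

/-- Key approximation: `n ≈ n * ι (h * w)` where `ι h = n* n`. -/
lemma normalizer_approx (ι : C₀(Q, ℂ) →⋆ₙₐ[ℂ] A) (hisom : Isometry ι)
    {n : A} {h : C₀(Q, ℂ)} (hh : ι h = star n * n) :
    ∀ η : ℝ, 0 < η → ∃ u w : C₀(Q, ℂ), u = h * w ∧ ‖n - n * ι u‖ ≤ η := by
  intro η hη
  have hιnorm : ∀ g : C₀(Q, ℂ), ‖ι g‖ = ‖g‖ := fun g =>
    hisom.norm_map_of_map_zero (map_zero ι) g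
  set r : ℝ := η ^ 2 with hr
  have hrpos : 0 < r := by positivity
  set ε' : ℝ := r ^ 2 with hε'
  have hε'pos : 0 < ε' := by positivity
  have hden : ∀ z : ℂ, ((‖z‖ ^ 2 + ε' : ℝ) : ℂ) ≠ 0 := fun z => by
    rw [Complex.ofReal_ne_zero]; positivity
  set G : ℂ → ℂ := fun z => (starRingEnd ℂ) z * (((‖z‖ ^ 2 + ε' : ℝ) : ℂ))⁻¹ with hG
  have hGcont : Continuous G := by
    refine Continuous.mul ?_ (Continuous.inv₀ ?_ hden)
    · exact Complex.continuous_conj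
    · exact Complex.continuous_ofReal.comp ((continuous_norm.pow 2).add continuous_const)
  have hG0 : G 0 = 0 := by simp [hG]
  set w : C₀(Q, ℂ) := ⟨⟨fun x => G (h x), hGcont.comp h.continuous⟩, by
      have ht := (hGcont.tendsto 0).comp (zero_at_infty h)
      rw [hG0] at ht; exact ht⟩ with hwdef
  set u : C₀(Q, ℂ) := h * w with hu
  refine ⟨u, w, rfl, ?_⟩
  have hupt : ∀ x, u x = ((‖h x‖ ^ 2 / (‖h x‖ ^ 2 + ε') : ℝ) : ℂ) := by
    intro x
    have h1 : u x = h x * G (h x) := rfl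
    rw [h1, hG]
    dsimp only
    rw [← mul_assoc, Complex.mul_conj']
    rw [eq_comm]
    push_cast
    rw [div_eq_mul_inv]
  set F : C₀(Q, ℂ) := h - h * u - star u * h + star u * (h * u) with hF
  have hkey : star (n - n * ι u) * (n - n * ι u) = ι F := by
    calc star (n - n * ι u) * (n - n * ι u)
        = star n * n - (star n * n) * ι u - ι (star u) * (star n * n)
            + ι (star u) * ((star n * n) * ι u) := by
          rw [star_sub, star_mul, ← map_star]
          noncomm_ring
      _ = ι F := by
          rw [← hh, hF]
          simp only [map_sub, map_add, map_mul]
  have hFx : ∀ x, ‖F x‖ ≤ r / 2 := by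
    intro x
    set sx : ℝ := ‖h x‖ with hsx
    have hsx0 : 0 ≤ sx := norm_nonneg _
    have hdpos : 0 < sx ^ 2 + ε' := by positivity
    set s : ℝ := sx ^ 2 / (sx ^ 2 + ε') with hs
    have hus : u x = (s : ℂ) := hupt x
    have hstar : (star u) x = (s : ℂ) := by
      have h0 : (star u) x = star (u x) := rfl
      rw [h0, hus, Complex.star_def, Complex.conj_ofReal]
    have h1s : 1 - s = ε' / (sx ^ 2 + ε') := by
      rw [hs]; field_simp; ring
    have hFpt : F x = h x * (((1 - s : ℝ) : ℂ)) ^ 2 := by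
      rw [hF]
      simp only [ZeroAtInftyContinuousMap.sub_apply, ZeroAtInftyContinuousMap.add_apply,
        ZeroAtInftyContinuousMap.mul_apply]
      rw [hstar, hus]
      push_cast
      ring
    rw [hFpt, norm_mul, norm_pow, Complex.norm_real, Real.norm_eq_abs,
      abs_of_nonneg (by rw [h1s]; positivity)]
    rw [h1s, ← hsx]
    have hkey2 : sx * ε' ^ 2 * 2 ≤ r * (sx ^ 2 + ε') ^ 2 := by
      rw [hε']
      nlinarith [mul_nonneg hrpos.le (sq_nonneg (sx - r)), mul_nonneg hrpos.le (sq_nonneg sx),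
        mul_nonneg (mul_nonneg hrpos.le hrpos.le) (sq_nonneg (sx - r)),
        mul_nonneg (mul_nonneg hrpos.le hrpos.le) (sq_nonneg sx), sq_nonneg (sx * r - r ^ 2)]
    rw [div_pow, mul_div_assoc']
    rw [div_le_div_iff₀ (by positivity) (by norm_num)]
    linarith
  have hFnorm : ‖F‖ ≤ r / 2 := zai_norm_le F (by positivity) hFx
  have hnn : ‖n - n * ι u‖ * ‖n - n * ι u‖ ≤ r := by
    rw [← CStarRing.norm_star_mul_self, hkey, hιnorm]
    linarith
  nlinarith [norm_nonneg (n - n * ι u)]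

end NS
section Rest
variable {Q : Type*} [TopologicalSpace Q] [LocallyCompactSpace Q] [T2Space Q]
variable {A : Type*} [NonUnitalCStarAlgebra A]

lemma nstarn_mem_range (D : NonUnitalStarSubalgebra ℂ A) (ι : C₀(Q, ℂ) →⋆ₙₐ[ℂ] A)
    (hisom : Isometry ι)
    (hnd₁ : closure (Submodule.span ℂ
        {x : A | ∃ f : C₀(Q, ℂ), ∃ d ∈ D, x = ι f * d} : Set A) = (D : Set A))
    (hnd₂ : closure (Submodule.span ℂ
        {x : A | ∃ d ∈ D, ∃ a : A, x = d * a} : Set A) = Set.univ)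
    (n : A) (hn1 : n ∈ normalizerIn (Set.range ι)) :
    ∃ h : C₀(Q, ℂ), ι h = star n * n := by
  have hclosed : IsClosed (Set.range ι) := hisom.isClosedEmbedding.isClosed_range
  have hmem : star n * n ∈ closure (Set.range ι) := by
    rw [Metric.mem_closure_iff]
    intro ε hε
    obtain ⟨e, hg, hsmall⟩ := approx_unit D ι hisom hnd₁ hnd₂ n (ε / (‖n‖ + 1)) (by positivity)
    refine ⟨star n * ι e * n, (hn1 (ι e) ⟨e, rfl⟩).2, ?_⟩
    rw [dist_eq_norm]
    have heq : star n * n - star n * ι e * n = star n * (n - ι e * n) := by noncomm_ring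
    calc ‖star n * n - star n * ι e * n‖ = ‖star n * (n - ι e * n)‖ := by rw [heq]
      _ ≤ ‖star n‖ * ‖n - ι e * n‖ := norm_mul_le _ _
      _ ≤ ‖n‖ * ‖ι e * n - n‖ := by rw [norm_star, norm_sub_rev]
      _ ≤ ‖n‖ * (ε / (‖n‖ + 1)) := mul_le_mul_of_nonneg_left hsmall.le (norm_nonneg n)
      _ < ε := by rw [mul_comm]; exact div_succ_mul_lt hε (norm_nonneg n)
  rw [hclosed.closure_eq] at hmem
  obtain ⟨h, hh⟩ := hmem
  exact ⟨h, hh⟩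

/-- The generating set of the concrete ideal `L_q`. -/
def Sgen (D : NonUnitalStarSubalgebra ℂ A) (ι : C₀(Q, ℂ) →⋆ₙₐ[ℂ] A) (q : Q) : Set A :=
  {x | ∃ f : C₀(Q, ℂ), f q = 0 ∧ (x = ι f ∨ ∃ d ∈ D, x = ι f * d)}

lemma Lq_mem_family (D : NonUnitalStarSubalgebra ℂ A) (hDclosed : IsClosed (D : Set A))
    (ι : C₀(Q, ℂ) →⋆ₙₐ[ℂ] A) (hrange : ∀ f : C₀(Q, ℂ), ι f ∈ D)
    (hcentral : ∀ f : C₀(Q, ℂ), ∀ d ∈ D, ι f * d = d * ι f) (q : Q) :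
    IsClosedIdealOf (closure (Submodule.span ℂ (Sgen D ι q) : Set A)) (D : Set A) ∧
      ∀ f : C₀(Q, ℂ), f q = 0 → ι f ∈ closure (Submodule.span ℂ (Sgen D ι q) : Set A) := by
  set S : Set A := Sgen D ι q with hS
  set M : Submodule ℂ A := Submodule.span ℂ S with hM
  have hSD : S ⊆ (D : Set A) := by
    rintro x ⟨f, hf, rfl | ⟨d, hd, rfl⟩⟩
    · exact hrange f
    · exact mul_mem (hrange f) hd
  have hMD : (M : Set A) ⊆ (D : Set A) := by
    rw [hM]
    intro x hx
    refine Submodule.span_induction (fun y hy => hSD hy) (zero_mem D)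
      (fun y z _ _ hy hz => add_mem hy hz) (fun c y _ hy => SMulMemClass.smul_mem c hy) hx
  have hclosureD : closure (M : Set A) ⊆ (D : Set A) :=
    closure_minimal hMD hDclosed
  have hleft : ∀ b ∈ D, ∀ y ∈ M, b * y ∈ M := by
    intro b hb y hy
    refine Submodule.span_induction (fun z hz => ?_) ?_ ?_ ?_ hy
    · obtain ⟨f, hf, hz'⟩ := hz
      refine Submodule.subset_span ?_
      rcases hz' with rfl | ⟨d, hd, rfl⟩
      · exact ⟨f, hf, Or.inr ⟨b, hb, (hcentral f b hb).symm⟩⟩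
      · refine ⟨f, hf, Or.inr ⟨b * d, mul_mem hb hd, ?_⟩⟩
        rw [← mul_assoc, ← hcentral f b hb, mul_assoc]
    · rw [mul_zero]; exact zero_mem M
    · intro z₁ z₂ _ _ h1 h2; rw [mul_add]; exact add_mem h1 h2
    · intro c z _ h1; rw [mul_smul_comm]; exact Submodule.smul_mem _ _ h1
  have hright : ∀ b ∈ D, ∀ y ∈ M, y * b ∈ M := by
    intro b hb y hy
    refine Submodule.span_induction (fun z hz => ?_) ?_ ?_ ?_ hy
    · obtain ⟨f, hf, hz'⟩ := hz
      refine Submodule.subset_span ?_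
      rcases hz' with rfl | ⟨d, hd, rfl⟩
      · exact ⟨f, hf, Or.inr ⟨b, hb, rfl⟩⟩
      · exact ⟨f, hf, Or.inr ⟨d * b, mul_mem hd hb, mul_assoc (ι f) d b⟩⟩
    · rw [zero_mul]; exact zero_mem M
    · intro z₁ z₂ _ _ h1 h2; rw [add_mul]; exact add_mem h1 h2
    · intro c z _ h1; rw [smul_mul_assoc]; exact Submodule.smul_mem _ _ h1
  constructor
  · refine ⟨hclosureD, isClosed_closure, ?_, ?_, ?_, ?_⟩
    · exact subset_closure (zero_mem M)
    · intro x hx y hy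
      have hx' : x ∈ M.topologicalClosure := by
        rwa [← Submodule.topologicalClosure_coe] at hx
      have hy' : y ∈ M.topologicalClosure := by
        rwa [← Submodule.topologicalClosure_coe] at hy
      have hxy : x + y ∈ M.topologicalClosure := Submodule.add_mem _ hx' hy'
      rwa [← Submodule.topologicalClosure_coe]
    · intro c x hx
      have hx' : x ∈ M.topologicalClosure := by
        rwa [← Submodule.topologicalClosure_coe] at hx
      have hcx : c • x ∈ M.topologicalClosure := Submodule.smul_mem _ c hx'
      rwa [← Submodule.topologicalClosure_coe]
    · intro x hx b hb
      constructor
      · have hc : Continuous fun y : A => b * y := continuous_const.mul continuous_id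
        exact map_mem_closure hc hx fun y hy => hleft b hb y hy
      · have hc : Continuous fun y : A => y * b := continuous_id.mul continuous_const
        exact map_mem_closure (f := fun y : A => y * b) hc hx fun y hy => hright b hb y hy
  · intro f hf
    exact subset_closure (Submodule.subset_span ⟨f, hf, Or.inl rfl⟩)

lemma eval_small (D : NonUnitalStarSubalgebra ℂ A) (ι : C₀(Q, ℂ) →⋆ₙₐ[ℂ] A)
    (hisom : Isometry ι)
    (hcentral : ∀ f : C₀(Q, ℂ), ∀ d ∈ D, ι f * d = d * ι f) (q : Q) :
    ∀ x ∈ closure (Submodule.span ℂ (Sgen D ι q) : Set A),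
      ∀ ε : ℝ, 0 < ε → ∃ e : C₀(Q, ℂ), e q = 1 ∧ ‖e‖ ≤ 1 ∧ ‖x * ι e‖ < ε := by
  have hιnorm : ∀ g : C₀(Q, ℂ), ‖ι g‖ = ‖g‖ := fun g =>
    hisom.norm_map_of_map_zero (map_zero ι) g
  set T : Set A := {x | ∀ ε : ℝ, 0 < ε → ∃ e : C₀(Q, ℂ), e q = 1 ∧ ‖e‖ ≤ 1 ∧ ‖x * ι e‖ < ε}
    with hT
  -- the basic Urysohn bump at `q` killing a given `f` vanishing at `q`
  have hbump : ∀ (f : C₀(Q, ℂ)), f q = 0 → ∀ δ : ℝ, 0 < δ →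
      ∃ e : C₀(Q, ℂ), e q = 1 ∧ ‖e‖ ≤ 1 ∧ ‖f * e‖ ≤ δ := by
    intro f hf δ hδ
    have hV : IsOpen {x : Q | ‖f x‖ < δ} :=
      isOpen_lt (continuous_norm.comp f.continuous) continuous_const
    have hqV : q ∈ {x : Q | ‖f x‖ < δ} := by simp [hf, hδ]
    obtain ⟨e, hg, h1, h0⟩ := zai_urysohn isCompact_singleton hV (by simpa using hqV)
    refine ⟨e, h1 q rfl, good_norm_le hg, ?_⟩
    refine zai_norm_le _ hδ.le fun x => ?_
    rw [ZeroAtInftyContinuousMap.mul_apply]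
    by_cases hxV : x ∈ {x : Q | ‖f x‖ < δ}
    · have he1 : ‖e x‖ ≤ 1 := by
        obtain ⟨t, ht0, ht1, hte⟩ := hg x
        rw [hte, Complex.norm_real, Real.norm_eq_abs, abs_of_nonneg ht0]; exact ht1
      calc ‖f x * e x‖ = ‖f x‖ * ‖e x‖ := norm_mul _ _
        _ ≤ δ * 1 := mul_le_mul hxV.le he1 (norm_nonneg _) hδ.le
        _ = δ := mul_one δ
    · rw [h0 x hxV]
      simpa using hδ.le
  have hTclosed : IsClosed T := by
    refine isClosed_of_closure_subset fun a ha ε hε => ?_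
    obtain ⟨b, hbT, hab⟩ := Metric.mem_closure_iff.mp ha (ε / 2) (by positivity)
    obtain ⟨e, he1, hen, heb⟩ := hbT (ε / 2) (by positivity)
    refine ⟨e, he1, hen, ?_⟩
    rw [dist_eq_norm] at hab
    have hsplit : a * ι e = (a - b) * ι e + b * ι e := by noncomm_ring
    calc ‖a * ι e‖ ≤ ‖(a - b) * ι e‖ + ‖b * ι e‖ := by rw [hsplit]; exact norm_add_le _ _
      _ ≤ ‖a - b‖ * ‖ι e‖ + ‖b * ι e‖ := add_le_add_left (norm_mul_le _ _) _
      _ ≤ ‖a - b‖ * 1 + ‖b * ι e‖ := by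
          gcongr
          rw [hιnorm]; exact hen
      _ < (ε / 2) * 1 + ε / 2 := by gcongr
      _ = ε := by ring
  have hT0 : (0 : A) ∈ T := by
    intro ε hε
    obtain ⟨e, he1, hen, _⟩ := hbump 0 (by simp) 1 one_pos
    exact ⟨e, he1, hen, by simpa using hε⟩
  have hTadd : ∀ x y : A, x ∈ T → y ∈ T → x + y ∈ T := by
    intro x y hx hy ε hε
    obtain ⟨e₁, he₁1, he₁n, hxe₁⟩ := hx (ε / 2) (by positivity)
    obtain ⟨e₂, he₂1, he₂n, hye₂⟩ := hy (ε / 2) (by positivity)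
    refine ⟨e₁ * e₂, ?_, ?_, ?_⟩
    · rw [ZeroAtInftyContinuousMap.mul_apply, he₁1, he₂1, mul_one]
    · calc ‖e₁ * e₂‖ ≤ ‖e₁‖ * ‖e₂‖ := norm_mul_le _ _
        _ ≤ 1 * 1 := mul_le_mul he₁n he₂n (norm_nonneg _) zero_le_one
        _ = 1 := mul_one 1
    · have hx2 : ‖x * ι (e₁ * e₂)‖ ≤ ‖x * ι e₁‖ := by
        rw [map_mul, ← mul_assoc]
        calc ‖x * ι e₁ * ι e₂‖ ≤ ‖x * ι e₁‖ * ‖ι e₂‖ := norm_mul_le _ _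
          _ ≤ ‖x * ι e₁‖ * 1 := by gcongr; rw [hιnorm]; exact he₂n
          _ = ‖x * ι e₁‖ := mul_one _
      have hy2 : ‖y * ι (e₁ * e₂)‖ ≤ ‖y * ι e₂‖ := by
        rw [mul_comm e₁ e₂, map_mul, ← mul_assoc]
        calc ‖y * ι e₂ * ι e₁‖ ≤ ‖y * ι e₂‖ * ‖ι e₁‖ := norm_mul_le _ _
          _ ≤ ‖y * ι e₂‖ * 1 := by gcongr; rw [hιnorm]; exact he₁n
          _ = ‖y * ι e₂‖ := mul_one _
      have hsplit : (x + y) * ι (e₁ * e₂) = x * ι (e₁ * e₂) + y * ι (e₁ * e₂) := add_mul _ _ _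
      calc ‖(x + y) * ι (e₁ * e₂)‖ ≤ ‖x * ι (e₁ * e₂)‖ + ‖y * ι (e₁ * e₂)‖ := by
            rw [hsplit]; exact norm_add_le _ _
        _ < ε / 2 + ε / 2 := add_lt_add (hx2.trans_lt hxe₁) (hy2.trans_lt hye₂)
        _ = ε := by ring
  have hTsmul : ∀ (c : ℂ) (x : A), x ∈ T → c • x ∈ T := by
    intro c x hx ε hε
    obtain ⟨e, he1, hen, hxe⟩ := hx (ε / (‖c‖ + 1)) (by positivity)
    refine ⟨e, he1, hen, ?_⟩
    rw [smul_mul_assoc, norm_smul]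
    calc ‖c‖ * ‖x * ι e‖ ≤ ε / (‖c‖ + 1) * ‖c‖ := by
          rw [mul_comm]; exact mul_le_mul_of_nonneg_right hxe.le (norm_nonneg c)
      _ < ε := div_succ_mul_lt hε (norm_nonneg c)
  have hTS : Sgen D ι q ⊆ T := by
    rintro x ⟨f, hf, rfl | ⟨d, hd, rfl⟩⟩
    · intro ε hε
      obtain ⟨e, he1, hen, hfe⟩ := hbump f hf (ε / 2) (by positivity)
      refine ⟨e, he1, hen, ?_⟩
      calc ‖ι f * ι e‖ = ‖f * e‖ := by rw [← map_mul, hιnorm]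
        _ ≤ ε / 2 := hfe
        _ < ε := by linarith
    · intro ε hε
      obtain ⟨e, he1, hen, hfe⟩ := hbump f hf (ε / (2 * (‖d‖ + 1))) (by positivity)
      refine ⟨e, he1, hen, ?_⟩
      have heq : ι f * d * ι e = ι (f * e) * d := by
        rw [mul_assoc, ← hcentral e d hd, map_mul, ← mul_assoc]
      calc ‖ι f * d * ι e‖ = ‖ι (f * e) * d‖ := by rw [heq]
        _ ≤ ‖f * e‖ * ‖d‖ := by rw [← hιnorm (f * e)]; exact norm_mul_le _ _
        _ ≤ (ε / (2 * (‖d‖ + 1))) * ‖d‖ := mul_le_mul_of_nonneg_right hfe (norm_nonneg d)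
        _ < ε := by
            rw [div_mul_eq_mul_div, div_lt_iff₀ (by positivity)]
            nlinarith [norm_nonneg d]
  intro x hx
  refine closure_minimal ?_ hTclosed hx
  intro y hy
  exact Submodule.span_induction (fun z hz => hTS hz) hT0
    (fun z₁ z₂ _ _ h1 h2 => hTadd z₁ z₂ h1 h2) (fun c z _ h1 => hTsmul c z h1) hy

end Rest
/-- With non-degenerate inclusions `C₀(Q) ⊆ D ⊆ A`, `C₀(Q)` central in `D`,
and `n ∈ N_A(C₀(Q)) ∩ N_A(D)`: `n C_{0,q₁}(Q) n* ⊆ C_{0,q₂}(Q)` iff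
`n J^unif_{q₁} n* ⊆ J^unif_{q₂}`. -/
theorem stmt18 {Q : Type*} [TopologicalSpace Q] [LocallyCompactSpace Q] [T2Space Q]
    {A : Type*} [NonUnitalCStarAlgebra A]
    (D : NonUnitalStarSubalgebra ℂ A) (hDclosed : IsClosed (D : Set A))
    (ι : C₀(Q, ℂ) →⋆ₙₐ[ℂ] A) (hisom : Isometry ι)
    (hrange : ∀ f : C₀(Q, ℂ), ι f ∈ D)
    (hcentral : ∀ f : C₀(Q, ℂ), ∀ d ∈ D, ι f * d = d * ι f)
    -- non-degeneracy of `C₀(Q) ⊆ D` :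
    (hnd₁ : closure (Submodule.span ℂ
        {x : A | ∃ f : C₀(Q, ℂ), ∃ d ∈ D, x = ι f * d} : Set A) = (D : Set A))
    -- non-degeneracy of `D ⊆ A` :
    (hnd₂ : closure (Submodule.span ℂ
        {x : A | ∃ d ∈ D, ∃ a : A, x = d * a} : Set A) = Set.univ)
    (q₁ q₂ : Q) (n : A)
    (hn : n ∈ normalizerIn (Set.range ι) ∩ normalizerIn (D : Set A)) :
    (∀ f : C₀(Q, ℂ), f q₁ = 0 → ∃ g : C₀(Q, ℂ), g q₂ = 0 ∧ n * ι f * star n = ι g) ↔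
    (∀ x ∈ JunifD D ι q₁, n * x * star n ∈ JunifD D ι q₂) := by
  have hιnorm : ∀ g : C₀(Q, ℂ), ‖ι g‖ = ‖g‖ := fun g =>
    hisom.norm_map_of_map_zero (map_zero ι) g
  have hfam₁ := Lq_mem_family D hDclosed ι hrange hcentral q₁
  have hfam₂ := Lq_mem_family D hDclosed ι hrange hcentral q₂
  have hJ₂closed : IsClosed (JunifD D ι q₂) :=
    isClosed_sInter fun L hL => hL.1.2.1
  have hJ₂zero : (0 : A) ∈ JunifD D ι q₂ :=
    Set.mem_sInter.mpr fun L hL => hL.1.2.2.1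
  have hJ₂add : ∀ x ∈ JunifD D ι q₂, ∀ y ∈ JunifD D ι q₂, x + y ∈ JunifD D ι q₂ :=
    fun x hx y hy => Set.mem_sInter.mpr fun L hL =>
      hL.1.2.2.2.1 x (Set.mem_sInter.mp hx L hL) y (Set.mem_sInter.mp hy L hL)
  have hJ₂smul : ∀ (c : ℂ), ∀ x ∈ JunifD D ι q₂, c • x ∈ JunifD D ι q₂ :=
    fun c x hx => Set.mem_sInter.mpr fun L hL =>
      hL.1.2.2.2.2.1 c x (Set.mem_sInter.mp hx L hL)
  constructor
  · -- forward direction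
    intro H
    obtain ⟨h, hh⟩ := nstarn_mem_range D ι hisom hnd₁ hnd₂ n hn.1
    have hJ₁L : JunifD D ι q₁ ⊆ closure (Submodule.span ℂ (Sgen D ι q₁) : Set A) :=
      Set.sInter_subset_of_mem hfam₁
    suffices hsub : closure (Submodule.span ℂ (Sgen D ι q₁) : Set A) ⊆
        {x : A | n * x * star n ∈ JunifD D ι q₂} by
      intro x hx
      exact hsub (hJ₁L hx)
    have hTclosed : IsClosed {x : A | n * x * star n ∈ JunifD D ι q₂} := by
      have hc : Continuous fun x : A => n * x * star n :=
        (continuous_const.mul continuous_id).mul continuous_const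
      exact hJ₂closed.preimage hc
    refine closure_minimal ?_ hTclosed
    intro y hy
    refine Submodule.span_induction (fun z hz => ?_) ?_ ?_ ?_ hy
    · -- generators
      obtain ⟨f, hf, hz'⟩ := hz
      obtain ⟨g, hg, hng⟩ := H f hf
      rcases hz' with rfl | ⟨d, hd, rfl⟩
      · show n * ι f * star n ∈ JunifD D ι q₂
        rw [hng]
        exact Set.mem_sInter.mpr fun L hL => hL.2 g hg
      · show n * (ι f * d) * star n ∈ JunifD D ι q₂
        have hcl : n * (ι f * d) * star n ∈ closure (JunifD D ι q₂) := by
          rw [Metric.mem_closure_iff]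
          intro δ hδ
          set C : ℝ := (‖f‖ + 1) * ((‖d‖ + 1) * (‖n‖ + 1)) with hC
          have hCpos : 0 < C := by positivity
          obtain ⟨u, w, huw, hnu⟩ := normalizer_approx ι hisom hh (δ / (2 * C)) (by positivity)
          refine ⟨ι g * (n * (ι w * d) * star n), ?_, ?_⟩
          · refine Set.mem_sInter.mpr fun L hL => ?_
            have hιg : ι g ∈ L := hL.2 g hg
            have hb : n * (ι w * d) * star n ∈ D := (hn.2 (ι w * d) (mul_mem (hrange w) hd)).1
            exact (hL.1.2.2.2.2.2 (ι g) hιg _ hb).2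
          · rw [dist_eq_norm]
            have e1 : ι g * (n * (ι w * d) * star n) = n * ι (u * f) * d * star n := by
              rw [← hng]
              have h1 : (n * ι f * star n) * (n * (ι w * d) * star n)
                  = n * (ι f * (star n * n) * ι w) * d * star n := by noncomm_ring
              rw [h1, ← hh, ← map_mul, ← map_mul]
              have h2 : f * h * w = u * f := by
                rw [huw, mul_comm f h, mul_assoc, mul_comm f w, ← mul_assoc]
              rw [h2]
            have e2 : n * (ι f * d) * star n - n * ι (u * f) * d * star n
                = (n - n * ι u) * (ι f * (d * star n)) := by
              rw [map_mul]
              noncomm_ring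
            rw [e1, e2]
            have hb1 : ‖ι f * (d * star n)‖ ≤ ‖f‖ * (‖d‖ * ‖n‖) := by
              calc ‖ι f * (d * star n)‖ ≤ ‖ι f‖ * ‖d * star n‖ := norm_mul_le _ _
                _ ≤ ‖ι f‖ * (‖d‖ * ‖star n‖) :=
                    mul_le_mul_of_nonneg_left (norm_mul_le _ _) (norm_nonneg _)
                _ = ‖f‖ * (‖d‖ * ‖n‖) := by rw [hιnorm, norm_star]
            have hb2 : ‖f‖ * (‖d‖ * ‖n‖) ≤ C := by
              rw [hC]
              have h3 : ‖d‖ * ‖n‖ ≤ (‖d‖ + 1) * (‖n‖ + 1) := by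
                nlinarith [norm_nonneg d, norm_nonneg n]
              nlinarith [norm_nonneg f, norm_nonneg d, norm_nonneg n,
                mul_nonneg (norm_nonneg d) (norm_nonneg n)]
            calc ‖(n - n * ι u) * (ι f * (d * star n))‖
                ≤ ‖n - n * ι u‖ * ‖ι f * (d * star n)‖ := norm_mul_le _ _
              _ ≤ (δ / (2 * C)) * C := by
                  exact mul_le_mul hnu (hb1.trans hb2) (norm_nonneg _) (by positivity)
              _ = δ / 2 := by field_simp
              _ < δ := by linarith
        rwa [hJ₂closed.closure_eq] at hcl
    · show n * 0 * star n ∈ JunifD D ι q₂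
      rw [mul_zero, zero_mul]
      exact hJ₂zero
    · intro z₁ z₂ _ _ h1 h2
      show n * (z₁ + z₂) * star n ∈ JunifD D ι q₂
      have hsplit : n * (z₁ + z₂) * star n = n * z₁ * star n + n * z₂ * star n := by
        noncomm_ring
      rw [hsplit]
      exact hJ₂add _ h1 _ h2
    · intro c z _ h1
      show n * (c • z) * star n ∈ JunifD D ι q₂
      have hsplit : n * (c • z) * star n = c • (n * z * star n) := by
        rw [mul_smul_comm, smul_mul_assoc]
      rw [hsplit]
      exact hJ₂smul c _ h1
  · -- reverse direction
    intro K f hf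
    have hιf : ι f ∈ JunifD D ι q₁ := Set.mem_sInter.mpr fun L hL => hL.2 f hf
    have h2 := K (ι f) hιf
    obtain ⟨g, hg⟩ := (hn.1 (ι f) ⟨f, rfl⟩).1
    refine ⟨g, ?_, hg.symm⟩
    have hgJ : ι g ∈ closure (Submodule.span ℂ (Sgen D ι q₂) : Set A) := by
      have hg2 : ι g ∈ JunifD D ι q₂ := by rw [hg]; exact h2
      exact Set.mem_sInter.mp hg2 _ hfam₂
    have habs : ∀ ε : ℝ, 0 < ε → ‖g q₂‖ < ε := by
      intro ε hε
      obtain ⟨e, he1, hen, hlt⟩ := eval_small D ι hisom hcentral q₂ (ι g) hgJ ε hε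
      have hb : ‖g q₂‖ ≤ ‖ι g * ι e‖ := by
        rw [← map_mul, hιnorm]
        calc ‖g q₂‖ = ‖(g * e) q₂‖ := by
              rw [ZeroAtInftyContinuousMap.mul_apply, he1, mul_one]
          _ ≤ ‖g * e‖ := zai_apply_le _ _
      linarith
    have hzero : ‖g q₂‖ = 0 := by
      by_contra hne
      have hpos : 0 < ‖g q₂‖ := lt_of_le_of_ne (norm_nonneg _) (Ne.symm hne)
      exact lt_irrefl _ (habs _ hpos)
    exact norm_eq_zero.mp hzero
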